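/- For every A > 0, every λ ∈ ℂ ∖ Σ_A, and every real number m, writing U := (1/2)·[[−1, λm],[−λm, 1]] and Û_A := (λ(m−A)/(2A·k_A(λ)))·σ₂ + ((m−A)/(2i·A²·k_A(λ)))·σ₃, one has the matrix identity D_A(λ)·U·E_A(λ) = −(i·k_A(λ)·m/2)·σ₃ + Û_A. (Consequently, if Φ solves Φ_x = UΦ, then Φ̂ := D_A(λ)Φ solves the transformed equation Φ̂_x + (i·k_A(λ)·m/2)·σ₃·Φ̂ = Û_A·Φ̂.) -/

import Mathlib

open Complex Matrix MeasureTheory Filter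

noncomputable def csqrt (z : ℂ) : ℂ := z ^ (1/2 : ℂ)

noncomputable def sB (w : ℂ) : ℂ := Complex.I * csqrt (-w)

def SigmaSet (A : ℝ) : Set ℂ := Complex.ofReal '' (Set.Iic (-(1/A)) ∪ Set.Ici (1/A))

noncomputable def kA (A : ℝ) (l : ℂ) : ℂ := Complex.I * csqrt (1/(A:ℂ)^2 - l^2)

lemma csqrt_sq (z : ℂ) : csqrt z ^ 2 = z := by
  unfold csqrt
  rcases eq_or_ne z 0 with h | h
  · simp [h, Complex.zero_cpow (by norm_num : (1/2:ℂ) ≠ 0)]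
  · rw [sq, ← Complex.cpow_add _ _ h]; norm_num

lemma csqrt_eq_zero {z : ℂ} (h : csqrt z = 0) : z = 0 := by
  have := csqrt_sq z; rw [h] at this; simpa using this.symm

lemma sB_sq (w : ℂ) : sB w ^ 2 = w := by
  unfold sB
  rw [mul_pow, csqrt_sq, Complex.I_sq]; ring

lemma csqrt_ofReal_nonneg {x : ℝ} (hx : 0 ≤ x) : csqrt (x:ℂ) = (Real.sqrt x : ℂ) := by
  unfold csqrt
  rw [show ((1:ℂ)/2) = (((1/2:ℝ)):ℂ) by norm_num, ← Complex.ofReal_cpow hx,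
    Real.sqrt_eq_rpow]

lemma kA_ne_zero {A : ℝ} (hA : 0 < A) {l : ℂ} (hl : l ∉ SigmaSet A) : kA A l ≠ 0 := by
  intro h
  unfold kA at h
  have h0 : csqrt (1/(A:ℂ)^2 - l^2) = 0 := by
    rcases mul_eq_zero.mp h with h' | h'
    · exact absurd h' Complex.I_ne_zero
    · exact h'
  have h1 : 1/(A:ℂ)^2 - l^2 = 0 := csqrt_eq_zero h0
  have h2 : (l - 1/(A:ℂ)) * (l + 1/(A:ℂ)) = 0 := by
    linear_combination -h1
  apply hl
  rcases mul_eq_zero.mp h2 with h' | h'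
  · exact ⟨1/A, Or.inr (Set.mem_Ici.mpr le_rfl), by push_cast; linear_combination -h'⟩
  · exact ⟨-(1/A), Or.inl (Set.mem_Iic.mpr le_rfl), by push_cast; linear_combination -h'⟩

lemma d_ne_zero {A : ℝ} (hA : 0 < A) {l : ℂ} (hl : l ∉ SigmaSet A) :
    (1 : ℂ) - Complex.I * (A:ℂ) * kA A l ≠ 0 := by
  intro h
  have hA0 : (A:ℂ) ≠ 0 := by exact_mod_cast hA.ne'
  set w : ℂ := 1/(A:ℂ)^2 - l^2 with hw
  have hcs : csqrt w = -(1/(A:ℂ)) := by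
    have h1 : Complex.I * (A:ℂ) * (Complex.I * csqrt w) = 1 := by
      rw [← sub_eq_zero]; unfold kA at h; rw [← hw] at h
      linear_combination -h
    have h3 : (A:ℂ) * csqrt w = -1 := by
      linear_combination (-1:ℂ) * h1 + csqrt w * (A:ℂ) * Complex.I_sq
    rw [show -(1/(A:ℂ)) = (-1)/(A:ℂ) by ring, eq_div_iff hA0]
    linear_combination h3
  have hw2 : w = 1/(A:ℂ)^2 := by
    have := csqrt_sq w
    rw [hcs] at this
    rw [← this]; ring
  have : csqrt w = (1/(A:ℂ)) := by
    rw [hw2, show (1/(A:ℂ)^2) = (((1/A^2 : ℝ)):ℂ) by push_cast; ring,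
      csqrt_ofReal_nonneg (by positivity)]
    rw [show (1/A^2 : ℝ) = (1/A)^2 by ring, Real.sqrt_sq (by positivity)]
    push_cast; ring
  rw [this] at hcs
  have : (2 : ℂ) * (1/(A:ℂ)) = 0 := by linear_combination hcs
  simp [hA0] at this

noncomputable def DA (A : ℝ) (l : ℂ) : Matrix (Fin 2) (Fin 2) ℂ :=
  (((Real.sqrt 2 : ℝ) : ℂ)⁻¹ * sB (1/(Complex.I * (A:ℂ) * kA A l) - 1)) •
    !![l * (A:ℂ) / (1 - Complex.I * (A:ℂ) * kA A l), -1;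
       -1, l * (A:ℂ) / (1 - Complex.I * (A:ℂ) * kA A l)]

noncomputable def EA (A : ℝ) (l : ℂ) : Matrix (Fin 2) (Fin 2) ℂ :=
  (((Real.sqrt 2 : ℝ) : ℂ)⁻¹ * sB (1/(Complex.I * (A:ℂ) * kA A l) - 1)) •
    !![l * (A:ℂ) / (1 - Complex.I * (A:ℂ) * kA A l), 1;
       1, l * (A:ℂ) / (1 - Complex.I * (A:ℂ) * kA A l)]

def sigma1 : Matrix (Fin 2) (Fin 2) ℂ := !![0, 1; 1, 0]
def sigma2 : Matrix (Fin 2) (Fin 2) ℂ := !![0, -Complex.I; Complex.I, 0]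
def sigma3 : Matrix (Fin 2) (Fin 2) ℂ := !![1, 0; 0, -1]

set_option maxHeartbeats 2000000 in
/-- conjugating U = (1/2)[[−1, λm],[−λm, 1]] by D_A gives
−(i·k_A(λ)·m/2)·σ₃ + Û_A. -/
theorem stmt_2 (A : ℝ) (hA : 0 < A) (l : ℂ) (hl : l ∉ SigmaSet A) (m : ℝ) :
    DA A l * ((1/2 : ℂ) • !![-1, l * (m:ℂ); -(l * (m:ℂ)), 1]) * EA A l
      = (-(Complex.I * kA A l * (m:ℂ) / 2)) • sigma3
        + ((l * ((m:ℂ) - (A:ℂ)) / (2 * (A:ℂ) * kA A l)) • sigma2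
           + (((m:ℂ) - (A:ℂ)) / (2 * Complex.I * (A:ℂ)^2 * kA A l)) • sigma3) := by
  have hA0 : (A:ℂ) ≠ 0 := by exact_mod_cast hA.ne'
  have hk0 : kA A l ≠ 0 := kA_ne_zero hA hl
  have hd : (1 : ℂ) - Complex.I * (A:ℂ) * kA A l ≠ 0 := d_ne_zero hA hl
  have hk2 : kA A l ^ 2 = l^2 - 1/(A:ℂ)^2 := by
    unfold kA; rw [mul_pow, csqrt_sq, Complex.I_sq]; ring
  have hs2 : sB (1/(Complex.I * (A:ℂ) * kA A l) - 1) ^ 2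
      = 1/(Complex.I * (A:ℂ) * kA A l) - 1 := sB_sq _
  have h2 : ((Real.sqrt 2 : ℝ):ℂ)^2 = 2 := by
    norm_cast; exact Real.sq_sqrt (by norm_num)
  have h2' : ((Real.sqrt 2 : ℝ):ℂ) ≠ 0 := by
    intro h; rw [h] at h2; norm_num at h2
  unfold DA EA sigma2 sigma3
  set k := kA A l with hkdef
  set s := sB (1/(Complex.I * (A:ℂ) * k) - 1) with hsdef
  set r : ℂ := ((Real.sqrt 2 : ℝ):ℂ) with hrdef
  clear_value k s r
  clear hkdef hsdef hrdef hl
  have hI : Complex.I ≠ 0 := Complex.I_ne_zero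
  have hI2 : Complex.I^2 = -1 := Complex.I_sq
  have hs2p : s^2 * (Complex.I * (A:ℂ) * k) = 1 - Complex.I * (A:ℂ) * k := by
    rw [hs2]; field_simp
  have hk2p : (A:ℂ)^2 * k^2 = (A:ℂ)^2 * l^2 - 1 := by
    rw [hk2]; field_simp
  have hmu : (Complex.I * (A:ℂ)^3 * k)^2 ≠ 0 :=
    pow_ne_zero _ (mul_ne_zero (mul_ne_zero Complex.I_ne_zero (pow_ne_zero _ hA0)) hk0)
  have hne : ∀ x y : ℂ, x ≠ 0 → y ≠ 0 → x*y ≠ 0 := fun x y hx hy => mul_ne_zero hx hy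
  have htwo : (2:ℂ) ≠ 0 := two_ne_zero
  have hD1 : r * (1 - Complex.I * (A:ℂ) * k) * 2 * (r * 2) * (r * (1 - Complex.I * (A:ℂ) * k)) ≠ 0 := by
    apply_rules [mul_ne_zero]
  have hD2 : r * (1 - Complex.I * (A:ℂ) * k) * 2 * (r * 2) * r ≠ 0 := by
    apply_rules [mul_ne_zero]
  have hD3 : (2:ℂ) * (2 * Complex.I * (A:ℂ)^2 * k) ≠ 0 := by
    apply_rules [mul_ne_zero]
    exact pow_ne_zero _ hA0
  have hD1' : r * 2 * (r * (1 - Complex.I * (A:ℂ) * k) * 2) * (r * (1 - Complex.I * (A:ℂ) * k)) ≠ 0 := by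
    apply_rules [mul_ne_zero]
  have hD2' : r * 2 * (r * (1 - Complex.I * (A:ℂ) * k) * 2) * r ≠ 0 := by
    apply_rules [mul_ne_zero]
  have hd' : (1:ℂ) - (A:ℂ) * Complex.I * k ≠ 0 := by rw [mul_comm (A:ℂ)]; exact hd
  ext i j
  fin_cases i <;> fin_cases j <;>
    simp only [Matrix.mul_apply, Fin.sum_univ_two, Matrix.smul_apply, Matrix.add_apply,
      Matrix.cons_val_zero, Matrix.cons_val_one, Matrix.head_cons, Matrix.head_fin_const,
      smul_eq_mul, Matrix.cons_val', Matrix.empty_val', Matrix.cons_val_fin_one, Fin.zero_eta, Fin.mk_one, Matrix.of_apply] <;>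
    field_simp [hd, hd', h2', hk0, hA0, Complex.I_ne_zero]
  · linear_combination ((A:ℂ)*(l^2*(A:ℂ)*(-(A:ℂ) + (1 - (A:ℂ) * Complex.I * k)*(m:ℂ)) + (1 - (A:ℂ) * Complex.I * k)*(l^2*(A:ℂ)*(m:ℂ) - (1 - (A:ℂ) * Complex.I * k))))*hs2p + (((1 - (A:ℂ) * Complex.I * k)*(-(A:ℂ) + 2*(1 - (A:ℂ) * Complex.I * k)*(m:ℂ)))*(A:ℂ)^2*k^2)*hI2 - ((1 - (A:ℂ) * Complex.I * k)*(-(A:ℂ) + 2*(1 - (A:ℂ) * Complex.I * k)*(m:ℂ)))*hk2p - ((1 - (A:ℂ) * Complex.I * k)^2*(-((A:ℂ)^2*Complex.I^2*k^2*(m:ℂ)) + ((m:ℂ) - (A:ℂ))))*h2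
  · linear_combination (l*(A:ℂ)*((1 - (A:ℂ) * Complex.I * k)*(-(A:ℂ) + (1 - (A:ℂ) * Complex.I * k)*(m:ℂ)) + (A:ℂ)*(l^2*(A:ℂ)*(m:ℂ) - (1 - (A:ℂ) * Complex.I * k))))*hs2p + ((1 - (A:ℂ) * Complex.I * k)*l*(A:ℂ)*(m:ℂ)*(A:ℂ)^2*k^2 + 2*(1 - (A:ℂ) * Complex.I * k)^2*((m:ℂ)-(A:ℂ))*l*(A:ℂ))*hI2 - ((1 - (A:ℂ) * Complex.I * k)*l*(A:ℂ)*(m:ℂ))*hk2p - ((1 - (A:ℂ) * Complex.I * k)^2*(-(((m:ℂ) - (A:ℂ))*(l*(A:ℂ)*Complex.I^2))))*h2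
  · linear_combination (-1:ℂ) * ((l*(A:ℂ)*((1 - (A:ℂ) * Complex.I * k)*(-(A:ℂ) + (1 - (A:ℂ) * Complex.I * k)*(m:ℂ)) + (A:ℂ)*(l^2*(A:ℂ)*(m:ℂ) - (1 - (A:ℂ) * Complex.I * k))))*hs2p + ((1 - (A:ℂ) * Complex.I * k)*l*(A:ℂ)*(m:ℂ)*(A:ℂ)^2*k^2 + 2*(1 - (A:ℂ) * Complex.I * k)^2*((m:ℂ)-(A:ℂ))*l*(A:ℂ))*hI2 - ((1 - (A:ℂ) * Complex.I * k)*l*(A:ℂ)*(m:ℂ))*hk2p - ((1 - (A:ℂ) * Complex.I * k)^2*(-(((m:ℂ) - (A:ℂ))*(l*(A:ℂ)*Complex.I^2))))*h2)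
  · linear_combination (-1:ℂ) * (((A:ℂ)*(l^2*(A:ℂ)*(-(A:ℂ) + (1 - (A:ℂ) * Complex.I * k)*(m:ℂ)) + (1 - (A:ℂ) * Complex.I * k)*(l^2*(A:ℂ)*(m:ℂ) - (1 - (A:ℂ) * Complex.I * k))))*hs2p + (((1 - (A:ℂ) * Complex.I * k)*(-(A:ℂ) + 2*(1 - (A:ℂ) * Complex.I * k)*(m:ℂ)))*(A:ℂ)^2*k^2)*hI2 - ((1 - (A:ℂ) * Complex.I * k)*(-(A:ℂ) + 2*(1 - (A:ℂ) * Complex.I * k)*(m:ℂ)))*hk2p - ((1 - (A:ℂ) * Complex.I * k)^2*(-((A:ℂ)^2*Complex.I^2*k^2*(m:ℂ)) + ((m:ℂ) - (A:ℂ))))*h2)
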